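/- Let ℓ ≥ 1 be a natural number and fix a point j = (j₁, j₂, j₃) ∈ L_ℓ. Define f_j : L_ℓ → L_ℓ by f_j((i₁, i₂, i₃)) = ((ℓ+1−j₁+i₁) mod' (2ℓ+1), (ℓ+1−j₂+i₂) mod' (2ℓ+1), (ℓ+1−j₃+i₃) mod' (2ℓ+1)). Then for every point x = (i₁, i₂, i₃) ∈ L_ℓ, the Euclidean distance from f_j(x) to the centre c = (ℓ+1, ℓ+1, ℓ+1) satisfies |f_j(x) − c| ≤ |x − j|. -/

import Mathlib

open Finset

/-- The point of `ℝ³` (with the Euclidean metric) corresponding to an integer triple. -/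
noncomputable def pt (i : ℤ × ℤ × ℤ) : EuclideanSpace ℝ (Fin 3) :=
  (WithLp.equiv 2 (Fin 3 → ℝ)).symm ![(i.1 : ℝ), (i.2.1 : ℝ), (i.2.2 : ℝ)]

/-- The lattice cube `L_ℓ`: integer triples `(i₁,i₂,i₃)` with `1 ≤ i₁,i₂,i₃ ≤ 2ℓ+1`. -/
noncomputable def latticeCube (ℓ : ℕ) : Finset (ℤ × ℤ × ℤ) :=
  Finset.Icc 1 (2 * (ℓ : ℤ) + 1) ×ˢ Finset.Icc 1 (2 * (ℓ : ℤ) + 1) ×ˢ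
    Finset.Icc 1 (2 * (ℓ : ℤ) + 1)

/-- `mod' m q`: the unique integer congruent to `m` modulo `q` lying in `{1, 2, …, q}`
(so `mod' q q = q` rather than `0`), for `q ≥ 1`. -/
def mod' (m q : ℤ) : ℤ := (m - 1) % q + 1

/-- The translation-mod map `f_j` on the lattice cube `L_ℓ`, sending `(i₁,i₂,i₃)` to
`((ℓ+1−j₁+i₁) mod' (2ℓ+1), (ℓ+1−j₂+i₂) mod' (2ℓ+1), (ℓ+1−j₃+i₃) mod' (2ℓ+1))`. -/
def fj (ℓ : ℕ) (j : ℤ × ℤ × ℤ) (i : ℤ × ℤ × ℤ) : ℤ × ℤ × ℤ :=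
  (mod' ((ℓ : ℤ) + 1 - j.1 + i.1) (2 * (ℓ : ℤ) + 1),
   mod' ((ℓ : ℤ) + 1 - j.2.1 + i.2.1) (2 * (ℓ : ℤ) + 1),
   mod' ((ℓ : ℤ) + 1 - j.2.2 + i.2.2) (2 * (ℓ : ℤ) + 1))

lemma key_abs (ℓ i j : ℤ) (hi : 1 ≤ i) (hi' : i ≤ 2*ℓ+1) (hj : 1 ≤ j) (hj' : j ≤ 2*ℓ+1)
    (hℓ : 1 ≤ ℓ) : |mod' (ℓ + 1 - j + i) (2*ℓ+1) - (ℓ+1)| ≤ |i - j| := by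
  unfold mod'
  have hr : ((ℓ + 1 - j + i - 1) % (2*ℓ+1) = ℓ - j + i + (2*ℓ+1) ∧ ℓ - j + i < 0) ∨
      ((ℓ + 1 - j + i - 1) % (2*ℓ+1) = ℓ - j + i ∧ 0 ≤ ℓ - j + i ∧ ℓ - j + i < 2*ℓ+1) ∨
      ((ℓ + 1 - j + i - 1) % (2*ℓ+1) = ℓ - j + i - (2*ℓ+1) ∧ 2*ℓ+1 ≤ ℓ - j + i) := by
    have hA : ℓ + 1 - j + i - 1 = ℓ - j + i := by ring
    rw [hA]
    rcases lt_or_ge (ℓ - j + i) 0 with h|h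
    · refine Or.inl ⟨?_, h⟩
      have e := Int.add_mul_emod_self_left (ℓ - j + i) (2*ℓ+1) 1
      rw [mul_one] at e
      rw [← e]
      exact Int.emod_eq_of_lt (by omega) (by omega)
    rcases lt_or_ge (ℓ - j + i) (2*ℓ+1) with h2|h2
    · exact Or.inr (Or.inl ⟨Int.emod_eq_of_lt h h2, h, h2⟩)
    · refine Or.inr (Or.inr ⟨?_, h2⟩)
      have e := Int.add_mul_emod_self_left (ℓ - j + i) (2*ℓ+1) (-1)
      rw [show ℓ - j + i + (2*ℓ+1) * (-1) = ℓ - j + i - (2*ℓ+1) by ring] at e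
      rw [← e]
      exact Int.emod_eq_of_lt (by omega) (by omega)
  rcases hr with ⟨hr,hc⟩|⟨hr,hc,hc2⟩|⟨hr,hc⟩ <;> rw [hr] <;>
  rcases abs_cases (i - j) with ⟨h3, _⟩|⟨h3, _⟩ <;> rw [h3, abs_le] <;>
  constructor <;> omega

lemma sq_le_of_key (a b : ℤ) (h : |a| ≤ |b|) : ((a:ℝ))^2 ≤ ((b:ℝ))^2 := by
  rw [← sq_abs (a:ℝ), ← sq_abs (b:ℝ)]
  apply pow_le_pow_left₀ (abs_nonneg _)
  rw [← Int.cast_abs, ← Int.cast_abs]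
  exact_mod_cast h

theorem fj_decreases_distance_to_centre (ℓ : ℕ) (hℓ : 1 ≤ ℓ)
    (c : ℤ × ℤ × ℤ) (hc : c = ((ℓ : ℤ) + 1, (ℓ : ℤ) + 1, (ℓ : ℤ) + 1))
    (j : ℤ × ℤ × ℤ) (hj : j ∈ latticeCube ℓ) :
    ∀ x ∈ latticeCube ℓ, dist (pt (fj ℓ j x)) (pt c) ≤ dist (pt x) (pt j) := by
  intro x hx
  simp only [latticeCube, Finset.mem_product, Finset.mem_Icc] at hj hx
  obtain ⟨⟨hj1, hj1'⟩, ⟨hj2, hj2'⟩, hj3, hj3'⟩ := hj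
  obtain ⟨⟨hx1, hx1'⟩, ⟨hx2, hx2'⟩, hx3, hx3'⟩ := hx
  have hl : (1:ℤ) ≤ (ℓ:ℤ) := by exact_mod_cast hℓ
  rw [hc]
  unfold pt fj
  rw [EuclideanSpace.dist_eq, EuclideanSpace.dist_eq]
  apply Real.sqrt_le_sqrt
  rw [Fin.sum_univ_three, Fin.sum_univ_three]
  simp only [WithLp.equiv_symm_apply, WithLp.ofLp_toLp, Matrix.cons_val_zero, Matrix.cons_val_one,
    Matrix.head_cons, Matrix.cons_val_two, Matrix.tail_cons]
  gcongr ?_ + ?_ + ?_ <;>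
  · rw [Real.dist_eq, Real.dist_eq, sq_abs, sq_abs, ← Int.cast_sub, ← Int.cast_sub]
    exact sq_le_of_key _ _ (key_abs _ _ _ (by omega) (by omega) (by omega) (by omega) hl)
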